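/- The scalar Riccati terminal value problem Λ̇_2(t) = 2â Λ_2(t) + Λ_2(t)² + Q̂ on [0, T] with Λ_2(T) = 0 has a unique solution defined on the whole interval [0, T], for every T > 0, under either of the following two conditions: (i) Q̂ ≤ 0; (ii) 0 < Q̂ ≤ â² and â > 0. -/

import Mathlib

open Set Real

/-- Uniqueness part: two solutions of the Riccati terminal value problem agree. -/
lemma riccati_unique_aux (ahat Qhat T : ℝ) (hT : 0 < T) (L L' : ℝ → ℝ)
    (hL : ∀ t ∈ Set.Icc (0:ℝ) T,
        HasDerivWithinAt L (2 * ahat * L t + (L t) ^ 2 + Qhat) (Set.Icc (0:ℝ) T) t)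
    (hLT : L T = 0)
    (hL' : ∀ t ∈ Set.Icc (0:ℝ) T,
        HasDerivWithinAt L' (2 * ahat * L' t + (L' t) ^ 2 + Qhat) (Set.Icc (0:ℝ) T) t)
    (hL'T : L' T = 0) :
    ∀ t ∈ Set.Icc (0:ℝ) T, L' t = L t := by
  have hLc : ContinuousOn L (Set.Icc 0 T) := fun t ht => (hL t ht).continuousWithinAt
  have hL'c : ContinuousOn L' (Set.Icc 0 T) := fun t ht => (hL' t ht).continuousWithinAt
  obtain ⟨C1, hC1⟩ := (isCompact_Icc (a := (0:ℝ)) (b := T)).exists_bound_of_continuousOn hLc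
  obtain ⟨C2, hC2⟩ := (isCompact_Icc (a := (0:ℝ)) (b := T)).exists_bound_of_continuousOn hL'c
  set C : ℝ := max (max C1 C2) 0 with hC
  have hC0 : 0 ≤ C := le_max_right _ _
  have hbL : ∀ t ∈ Set.Icc (0:ℝ) T, L t ∈ Set.Icc (-C) C := by
    intro t ht
    have := hC1 t ht
    rw [Real.norm_eq_abs, abs_le] at this
    constructor
    · have : -C1 ≤ L t := this.1
      have h1 : C1 ≤ C := le_trans (le_max_left _ _) (le_max_left _ _)
      linarith
    · have h1 : C1 ≤ C := le_trans (le_max_left _ _) (le_max_left _ _)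
      linarith [this.2]
  have hbL' : ∀ t ∈ Set.Icc (0:ℝ) T, L' t ∈ Set.Icc (-C) C := by
    intro t ht
    have := hC2 t ht
    rw [Real.norm_eq_abs, abs_le] at this
    have h1 : C2 ≤ C := le_trans (le_max_right _ _) (le_max_left _ _)
    exact ⟨by linarith [this.1], by linarith [this.2]⟩
  set K : NNReal := ⟨2 * |ahat| + 2 * C, by positivity⟩ with hK
  have hv : ∀ t : ℝ, LipschitzOnWith K
      (fun x : ℝ => 2 * ahat * x + x ^ 2 + Qhat) (Set.Icc (-C) C) := by
    intro t
    rw [lipschitzOnWith_iff_dist_le_mul]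
    intro x hx y hy
    rw [Real.dist_eq, Real.dist_eq]
    have hxe : |x| ≤ C := abs_le.mpr ⟨hx.1, hx.2⟩
    have hye : |y| ≤ C := abs_le.mpr ⟨hy.1, hy.2⟩
    have heq : (2 * ahat * x + x ^ 2 + Qhat) - (2 * ahat * y + y ^ 2 + Qhat)
        = (2 * ahat + x + y) * (x - y) := by ring
    rw [heq, abs_mul]
    have hb : |2 * ahat + x + y| ≤ 2 * |ahat| + 2 * C := by
      calc |2 * ahat + x + y| ≤ |2 * ahat + x| + |y| := abs_add_le _ _
        _ ≤ |2 * ahat| + |x| + |y| := by linarith [abs_add_le (2 * ahat) x]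
        _ ≤ 2 * |ahat| + 2 * C := by
            rw [abs_mul, abs_two]; linarith
    have : (K : ℝ) = 2 * |ahat| + 2 * C := rfl
    rw [this]
    exact mul_le_mul_of_nonneg_right hb (abs_nonneg _)
  have key : ∀ f : ℝ → ℝ,
      (∀ t ∈ Set.Icc (0:ℝ) T,
        HasDerivWithinAt f (2 * ahat * f t + (f t) ^ 2 + Qhat) (Set.Icc (0:ℝ) T) t) →
      ∀ t ∈ Set.Ioc (0:ℝ) T,
        HasDerivWithinAt f (2 * ahat * f t + (f t) ^ 2 + Qhat) (Set.Iic t) t := by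
    intro f hf t ht
    refine (hf t ⟨ht.1.le, ht.2⟩).mono_of_mem_nhdsWithin ?_
    rw [mem_nhdsWithin]
    refine ⟨Set.Ioi 0, isOpen_Ioi, ht.1, ?_⟩
    intro x hx
    exact ⟨hx.1.le, hx.2.trans ht.2⟩
  have main := ODE_solution_unique_of_mem_Icc_left
    (v := fun _ x : ℝ => 2 * ahat * x + x ^ 2 + Qhat)
    (s := fun _ : ℝ => Set.Icc (-C) C) (K := K) (fun t _ => hv t)
    hL'c (key L' hL') (fun t ht => hbL' t ⟨ht.1.le, ht.2⟩)
    hLc (key L hL) (fun t ht => hbL t ⟨ht.1.le, ht.2⟩)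
    (hL'T.trans hLT.symm)
  intro t ht
  exact main ht

/-- The scalar Riccati terminal value problem
`Λ̇₂ = 2â Λ₂ + Λ₂² + Q̂` on `[0,T]`, `Λ₂(T) = 0`, has a unique solution defined on the
whole interval `[0, T]`, for every `T > 0`, under either of the conditions
(i) `Q̂ ≤ 0`; (ii) `0 < Q̂ ≤ â²` and `â > 0`. -/
theorem scalar_riccati_global_solution
    (ahat Qhat : ℝ)
    (h : Qhat ≤ 0 ∨ (0 < Qhat ∧ Qhat ≤ ahat ^ 2 ∧ 0 < ahat)) :
    ∀ T : ℝ, 0 < T →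
      ∃ L : ℝ → ℝ,
        ((∀ t ∈ Set.Icc (0:ℝ) T,
            HasDerivWithinAt L (2 * ahat * L t + (L t) ^ 2 + Qhat)
              (Set.Icc (0:ℝ) T) t)
          ∧ L T = 0) ∧
        ∀ L' : ℝ → ℝ,
          ((∀ t ∈ Set.Icc (0:ℝ) T,
              HasDerivWithinAt L' (2 * ahat * L' t + (L' t) ^ 2 + Qhat)
                (Set.Icc (0:ℝ) T) t)
            ∧ L' T = 0) →
          ∀ t ∈ Set.Icc (0:ℝ) T, L' t = L t := by
  intro T hT
  suffices hex : ∃ L : ℝ → ℝ,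
      (∀ t ∈ Set.Icc (0:ℝ) T,
        HasDerivWithinAt L (2 * ahat * L t + (L t) ^ 2 + Qhat) (Set.Icc (0:ℝ) T) t) ∧ L T = 0 by
    obtain ⟨L, hL, hLT⟩ := hex
    exact ⟨L, ⟨hL, hLT⟩, fun L' ⟨hL', hL'T⟩ =>
      riccati_unique_aux ahat Qhat T hT L L' hL hLT hL' hL'T⟩
  by_cases hQ0 : Qhat = 0
  · refine ⟨fun _ => 0, fun t _ => ?_, rfl⟩
    subst hQ0
    simpa using (hasDerivWithinAt_const t (Set.Icc (0:ℝ) T) (0:ℝ))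
  by_cases hQa : Qhat = ahat ^ 2
  · -- degenerate case `Q̂ = â²` with `â > 0`
    have ha : 0 < ahat := by
      rcases h with h | h
      · exfalso; apply hQ0; nlinarith [sq_nonneg ahat]
      · exact h.2.2
    refine ⟨fun t => ahat / (1 + ahat * (T - t)) - ahat, fun t ht => ?_, ?_⟩
    · have hden : (0:ℝ) < 1 + ahat * (T - t) := by nlinarith [ht.2]
      have h1 : HasDerivAt (fun s : ℝ => 1 + ahat * (T - s)) (-ahat) t := by
        have := (((hasDerivAt_id t).const_sub T).const_mul ahat).const_add 1
        simpa using this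
      have h2 := (hasDerivAt_const t ahat).div h1 hden.ne'
      have h3 := h2.sub_const ahat
      refine (h3.hasDerivWithinAt).congr_deriv ?_
      subst hQa
      field_simp
      ring
    · simp
  · -- main case: `d = √(â² - Q̂) > 0` and `â + d > 0`
    have hpos : 0 < ahat ^ 2 - Qhat := by
      rcases h with h | h
      · rcases lt_or_eq_of_le h with h' | h'
        · nlinarith [sq_nonneg ahat]
        · exact absurd h'.symm (Ne.symm hQ0)
      · rcases lt_or_eq_of_le h.2.1 with h' | h'
        · linarith
        · exact absurd h' hQa
    set d : ℝ := Real.sqrt (ahat ^ 2 - Qhat) with hd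
    have hd0 : 0 < d := Real.sqrt_pos.mpr hpos
    have hd2 : d ^ 2 = ahat ^ 2 - Qhat := Real.sq_sqrt hpos.le
    have hA : 0 < ahat + d := by
      rcases h with h | h
      · have hsq : ahat ^ 2 < d ^ 2 := by
          rcases lt_or_eq_of_le h with h' | h'
          · nlinarith
          · exact absurd h'.symm (Ne.symm hQ0)
        nlinarith
      · linarith [h.2.2]
    have hQ : Qhat = ahat ^ 2 - d ^ 2 := by rw [hd2]; ring
    refine ⟨fun t => d * ((ahat + d) * Real.exp (2 * d * (T - t)) + (ahat - d)) /
        ((ahat + d) * Real.exp (2 * d * (T - t)) - (ahat - d)) - ahat, fun t ht => ?_, ?_⟩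
    · have hE1 : (1:ℝ) ≤ Real.exp (2 * d * (T - t)) := by
        rw [← Real.exp_zero]
        apply Real.exp_le_exp.mpr
        nlinarith [ht.2]
      have hden : (0:ℝ) < (ahat + d) * Real.exp (2 * d * (T - t)) - (ahat - d) := by
        nlinarith
      have hinner : HasDerivAt (fun s : ℝ => 2 * d * (T - s)) (-(2 * d)) t := by
        have := ((hasDerivAt_id t).const_sub T).const_mul (2 * d)
        simpa using this
      have he : HasDerivAt (fun s : ℝ => Real.exp (2 * d * (T - s)))
          (Real.exp (2 * d * (T - t)) * -(2 * d)) t :=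
        (Real.hasDerivAt_exp _).comp t hinner
      have hnum : HasDerivAt
          (fun s : ℝ => d * ((ahat + d) * Real.exp (2 * d * (T - s)) + (ahat - d)))
          (d * ((ahat + d) * (Real.exp (2 * d * (T - t)) * -(2 * d)))) t :=
        ((he.const_mul (ahat + d)).add_const (ahat - d)).const_mul d
      have hdenD : HasDerivAt
          (fun s : ℝ => (ahat + d) * Real.exp (2 * d * (T - s)) - (ahat - d))
          ((ahat + d) * (Real.exp (2 * d * (T - t)) * -(2 * d))) t :=
        (he.const_mul (ahat + d)).sub_const (ahat - d)
      have hq := (hnum.div hdenD hden.ne').sub_const ahat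
      refine (hq.hasDerivWithinAt).congr_deriv ?_
      rw [hQ]
      have hden' := hden.ne'
      beta_reduce
      generalize Real.exp (2 * d * (T - t)) = E at hden' ⊢
      field_simp
      ring
    · show d * ((ahat + d) * Real.exp (2 * d * (T - T)) + (ahat - d)) /
          ((ahat + d) * Real.exp (2 * d * (T - T)) - (ahat - d)) - ahat = 0
      rw [sub_self, mul_zero, Real.exp_zero]
      have hne : (ahat + d) * 1 - (ahat - d) ≠ 0 := by
        intro hc
        apply hd0.ne'
        nlinarith
      field_simp [hd0.ne']
      ring
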